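/- arXiv:1502.02279 — 3 statements merged into one kernel-verified Lean document; each statement's English description precedes it below -/
import Mathlib

section
/- Let A = Λ(a,b) with d(a) = 0, d(b) = b·a, and let A' ⊂ A be the sub-CDGA Λ(a) generated by a (with zero differential). Then the inclusion ι : A' → A is a quasi-isomorphism, but R^1(A') = {0} while R^1(A) = {0,1}; hence resonance varieties are not invariants of quasi-isomorphism type of CDGAs. -/
open Submodule

/-- The grading of the exterior algebra `Λ(a, b)` on two degree-1 generators. -/
def grAB {A : Type} [Ring A] [Algebra ℂ A] (a b : A) : ℕ → Submodule ℂ A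
  | 0 => span ℂ {1}
  | 1 => span ℂ {a, b}
  | 2 => span ℂ {a * b}
  | _ + 3 => ⊥

/-- The grading of the sub-CDGA `A' = Λ(a) ⊆ Λ(a, b)` generated by `a`. -/
def grA {A : Type} [Ring A] [Algebra ℂ A] (a : A) : ℕ → Submodule ℂ A
  | 0 => span ℂ {1}
  | 1 => span ℂ {a}
  | _ + 2 => ⊥

/-- `H^i(A, δ_ω) ≠ 0` for the twisted differential `δ_ω u = ω * u + d u`. -/
def ResMem {A : Type} [Ring A] [Algebra ℂ A] (𝒜 : ℕ → Submodule ℂ A)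
    (d : A →ₗ[ℂ] A) (ω : A) (i : ℕ) : Prop :=
  ∃ u ∈ 𝒜 i, ω * u + d u = 0 ∧ ∀ v ∈ 𝒜 (i - 1), ω * v + d v ≠ u

/-- let `A = Λ(a, b)` with `d a = 0`, `d b = b * a`, and let
`A' = Λ(a)` be the sub-CDGA generated by `a` (with zero differential).  The
inclusion `ι : A' → A` is a quasi-isomorphism: both have `H⁰ = ℂ·1`, the
degree-1 cocycles of `A` are exactly `A'^1 = ℂ·a` (and there are no degree-1
coboundaries), `H²(A) = 0` (every degree-2 cocycle of `A` is a coboundary) and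
`A'^2 = 0`.  Nevertheless `R¹(A') = {0}` while `R¹(A) = {0, 1}`; hence the
resonance varieties are not invariants of the quasi-isomorphism type. -/
theorem statement_10 (A : Type) [Ring A] [Algebra ℂ A] (a b : A)
    (hind : LinearIndependent ℂ ![(1 : A), a, b, a * b])
    (haa : a * a = 0) (hbb : b * b = 0) (hba : b * a = -(a * b))
    (d : A →ₗ[ℂ] A)
    (hd1 : d 1 = 0) (hda : d a = 0) (hdb : d b = b * a) (hdab : d (a * b) = 0) :
    (∀ z ∈ grA a 0, d z = 0)
    ∧ (∀ z ∈ grAB a b 1, (d z = 0 ↔ z ∈ grA a 1))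
    ∧ (∀ z ∈ grAB a b 2, d z = 0 → ∃ w ∈ grAB a b 1, d w = z)
    ∧ (∀ t : ℂ, ResMem (grA a) (0 : A →ₗ[ℂ] A) (t • a) 1 ↔ t = 0)
    ∧ (∀ t : ℂ, ResMem (grAB a b) d (t • a) 1 ↔ (t = 0 ∨ t = 1)) := by
  have hli : ∀ c0 c1 c2 c3 : ℂ,
      c0 • (1 : A) + c1 • a + c2 • b + c3 • (a * b) = 0 →
      c0 = 0 ∧ c1 = 0 ∧ c2 = 0 ∧ c3 = 0 := by
    intro c0 c1 c2 c3 h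
    have h2 := Fintype.linearIndependent_iff.mp hind ![c0, c1, c2, c3]
      (by simpa [Fin.sum_univ_four] using h)
    exact ⟨h2 0, h2 1, h2 2, h2 3⟩
  have ha0 : a ≠ 0 := by simpa using hind.ne_zero 1
  have hb0 : b ≠ 0 := by simpa using hind.ne_zero 2
  refine ⟨?_, ?_, ?_, ?_, ?_⟩
  · -- degree-0 part of A' has zero differential
    intro z hz
    obtain ⟨c, rfl⟩ := mem_span_singleton.mp hz
    simp [hd1]
  · -- degree-1 cocycles of A are exactly ℂ·a
    intro z hz
    obtain ⟨s, t, rfl⟩ := mem_span_pair.mp hz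
    constructor
    · intro h
      have hdz : d (s • a + t • b) = (-t) • (a * b) := by
        rw [map_add, map_smul, map_smul, hda, hdb, hba, smul_zero, zero_add,
          smul_neg, neg_smul]
      rw [hdz] at h
      have ht : -t = 0 := (hli 0 0 0 (-t) (by simpa using h)).2.2.2
      have ht' : t = 0 := neg_eq_zero.mp ht
      rw [ht', zero_smul, add_zero]
      exact mem_span_singleton.mpr ⟨s, rfl⟩
    · intro hz1
      obtain ⟨c, hc⟩ := mem_span_singleton.mp hz1
      rw [← hc, map_smul, hda, smul_zero]
  · -- H²(A) = 0
    intro z hz _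
    obtain ⟨c, rfl⟩ := mem_span_singleton.mp hz
    refine ⟨(-c) • b, mem_span_pair.mpr ⟨0, -c, by simp⟩, ?_⟩
    rw [map_smul, hdb, hba, smul_neg, neg_smul, neg_neg]
  · -- R¹(A') = {0}
    intro t
    constructor
    · rintro ⟨u, hu, -, hne⟩
      by_contra ht
      obtain ⟨c, rfl⟩ := mem_span_singleton.mp hu
      refine hne ((t⁻¹ * c) • 1) (mem_span_singleton.mpr ⟨t⁻¹ * c, rfl⟩) ?_
      rw [LinearMap.zero_apply, add_zero, smul_mul_assoc, mul_smul_comm,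
        mul_one, smul_smul]
      congr 1
      field_simp
    · rintro rfl
      refine ⟨a, mem_span_singleton_self a, by simp, ?_⟩
      intro v hv
      simpa using ha0.symm
  · -- R¹(A) = {0, 1}
    intro t
    constructor
    · rintro ⟨u, hu, hc, hne⟩
      by_contra ht
      push_neg at ht
      obtain ⟨ht0, ht1⟩ := ht
      obtain ⟨s, r, rfl⟩ := mem_span_pair.mp hu
      have h1 : (t • a) * (s • a + r • b) = (t * r) • (a * b) := by
        rw [mul_add, smul_mul_assoc, smul_mul_assoc, mul_smul_comm,
          mul_smul_comm, haa, smul_zero, smul_zero, zero_add, smul_smul]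
      have h2 : d (s • a + r • b) = -(r • (a * b)) := by
        rw [map_add, map_smul, map_smul, hda, hdb, hba, smul_zero, zero_add,
          smul_neg]
      rw [h1, h2] at hc
      have hc' : (0:ℂ) • (1:A) + (0:ℂ) • a + (0:ℂ) • b + (t * r - r) • (a * b) = 0 := by
        rw [sub_smul]
        simpa [sub_eq_add_neg] using hc
      have hr : t * r - r = 0 := (hli 0 0 0 (t * r - r) hc').2.2.2
      have hr0 : r = 0 := by
        rcases mul_eq_zero.mp (show (t - 1) * r = 0 by ring_nf; linear_combination hr) with h | h
        · exact absurd (sub_eq_zero.mp h) ht1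
        · exact h
      refine hne ((t⁻¹ * s) • 1) (mem_span_singleton.mpr ⟨t⁻¹ * s, rfl⟩) ?_
      rw [map_smul, hd1, smul_zero, add_zero, smul_mul_assoc, mul_smul_comm,
        mul_one, smul_smul, hr0, zero_smul, add_zero]
      congr 1
      field_simp
    · rintro (rfl | rfl)
      · refine ⟨a, mem_span_pair.mpr ⟨1, 0, by simp⟩, by simp [hda], ?_⟩
        intro v hv
        obtain ⟨c, rfl⟩ := mem_span_singleton.mp hv
        rw [map_smul, hd1, smul_zero, zero_smul, zero_mul, zero_add]
        exact ha0.symm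
      · refine ⟨b, mem_span_pair.mpr ⟨0, 1, by simp⟩, ?_, ?_⟩
        · rw [one_smul, hdb, hba, add_neg_cancel]
        · intro v hv
          obtain ⟨c, rfl⟩ := mem_span_singleton.mp hv
          rw [one_smul, map_smul, hd1, smul_zero, add_zero, mul_smul_comm,
            mul_one]
          intro h
          have := (hli 0 c (-1) 0 (by simp [h])).2.2.1
          norm_num at this
end

section
/- Let W = {(t_1,t_2,t_3) ∈ (ℂ*)³ : t_2 - 1 = (t_1+1)(t_3-1)}. Then the exponential tangent cone τ_1(W) = {z ∈ ℂ³ : exp(λz) ∈ W for all λ ∈ ℂ} equals the union of the two lines {z : z_2 = z_3 = 0} ∪ {z : z_1 = z_3, z_2 = 2z_3}. -/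
open Complex

private lemma aux_deriv (a b c : ℂ)
    (h : ∀ lam : ℂ, Complex.exp (lam * b) - 1 -
        (Complex.exp (lam * a) + 1) * (Complex.exp (lam * c) - 1) = 0) :
    b = 2 * c ∧ b * b = 2 * (a * c) + 2 * (c * c) := by
  set g : ℂ → ℂ := fun lam => Complex.exp (lam * b) - 1 -
      (Complex.exp (lam * a) + 1) * (Complex.exp (lam * c) - 1) with hg
  set g1 : ℂ → ℂ := fun lam => Complex.exp (lam * b) * b -
      ((Complex.exp (lam * a) * a) * (Complex.exp (lam * c) - 1) +
        (Complex.exp (lam * a) + 1) * (Complex.exp (lam * c) * c)) with hg1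
  have hder : ∀ lam : ℂ, HasDerivAt g (g1 lam) lam := by
    intro lam
    have ea : HasDerivAt (fun x : ℂ => Complex.exp (x * a)) (Complex.exp (lam * a) * a) lam :=
      by simpa using ((hasDerivAt_id lam).mul_const a).cexp
    have eb : HasDerivAt (fun x : ℂ => Complex.exp (x * b)) (Complex.exp (lam * b) * b) lam :=
      by simpa using ((hasDerivAt_id lam).mul_const b).cexp
    have ec : HasDerivAt (fun x : ℂ => Complex.exp (x * c)) (Complex.exp (lam * c) * c) lam :=
      by simpa using ((hasDerivAt_id lam).mul_const c).cexp
    have := (eb.sub_const 1).sub ((ea.add_const 1).mul (ec.sub_const 1))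
    exact this
  have hg0 : g = fun _ => (0 : ℂ) := funext h
  have hg1zero : ∀ lam : ℂ, g1 lam = 0 := by
    intro lam
    have h1 : deriv g lam = g1 lam := (hder lam).deriv
    rw [hg0] at h1
    simpa using h1.symm
  have e1 : b = 2 * c := by
    have := hg1zero 0
    simp [g1] at this
    linear_combination this
  -- second derivative
  set g2 : ℂ → ℂ := fun lam => Complex.exp (lam * b) * b * b -
      ((Complex.exp (lam * a) * a * a) * (Complex.exp (lam * c) - 1) +
        (Complex.exp (lam * a) * a) * (Complex.exp (lam * c) * c) +
        ((Complex.exp (lam * a) * a) * (Complex.exp (lam * c) * c) +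
          (Complex.exp (lam * a) + 1) * (Complex.exp (lam * c) * c * c))) with hg2
  have hder2 : ∀ lam : ℂ, HasDerivAt g1 (g2 lam) lam := by
    intro lam
    have ea : HasDerivAt (fun x : ℂ => Complex.exp (x * a)) (Complex.exp (lam * a) * a) lam :=
      by simpa using ((hasDerivAt_id lam).mul_const a).cexp
    have eb : HasDerivAt (fun x : ℂ => Complex.exp (x * b)) (Complex.exp (lam * b) * b) lam :=
      by simpa using ((hasDerivAt_id lam).mul_const b).cexp
    have ec : HasDerivAt (fun x : ℂ => Complex.exp (x * c)) (Complex.exp (lam * c) * c) lam :=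
      by simpa using ((hasDerivAt_id lam).mul_const c).cexp
    have := (eb.mul_const b).sub
      ((((ea.mul_const a).mul (ec.sub_const 1)).add
        ((ea.add_const 1).mul (ec.mul_const c))))
    exact this
  have hg1fun : g1 = fun _ => (0 : ℂ) := funext hg1zero
  have hg2zero : g2 0 = 0 := by
    have h1 : deriv g1 0 = g2 0 := (hder2 0).deriv
    rw [hg1fun] at h1
    simpa using h1.symm
  refine ⟨e1, ?_⟩
  simp [g2] at hg2zero
  linear_combination hg2zero

/-- The exponential tangent cone at the identity of a subset `W ⊆ (ℂ*)ⁿ`. -/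
def tau1 (n : ℕ) (W : Set (Fin n → ℂ)) : Set (Fin n → ℂ) :=
  {z | ∀ lam : ℂ, (fun j => Complex.exp (lam * z j)) ∈ W}

/-- for `W = {(t₁,t₂,t₃) ∈ (ℂ*)³ : t₂ - 1 = (t₁+1)(t₃-1)}`, the
exponential tangent cone `τ₁(W)` is the union of the two lines
`{z₂ = z₃ = 0}` and `{z₁ = z₃, z₂ = 2z₃}` in `ℂ³`
(coordinates `z₁ = z 0`, `z₂ = z 1`, `z₃ = z 2`). -/
theorem statement_15 :
    tau1 3 {t | (∀ j, t j ≠ 0) ∧ t 1 - 1 = (t 0 + 1) * (t 2 - 1)}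
      = {z | z 1 = 0 ∧ z 2 = 0} ∪ {z | z 0 = z 2 ∧ z 1 = 2 * z 2} := by
  ext z
  constructor
  · intro hz
    have h : ∀ lam : ℂ, Complex.exp (lam * z 1) - 1 -
        (Complex.exp (lam * z 0) + 1) * (Complex.exp (lam * z 2) - 1) = 0 := by
      intro lam
      have := (hz lam).2
      simp only at this
      linear_combination this
    obtain ⟨e1, e2⟩ := aux_deriv (z 0) (z 1) (z 2) h
    have hc : z 2 = 0 ∨ z 2 = z 0 := by
      have : z 2 * (z 2 - z 0) = 0 := by linear_combination e2/2 - (z 1 + 2*z 2)/2 * e1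
      rcases mul_eq_zero.mp this with h | h
      · exact Or.inl h
      · exact Or.inr (by linear_combination h)
    rcases hc with h | h
    · left
      exact ⟨by rw [e1, h]; ring, h⟩
    · right
      exact ⟨h.symm, e1⟩
  · intro hz lam
    constructor
    · intro j; exact Complex.exp_ne_zero _
    · rcases hz with ⟨h1, h2⟩ | ⟨h1, h2⟩
      · simp only [h1, h2, mul_zero, Complex.exp_zero]
        ring
      · simp only [h1, h2]
        have : Complex.exp (lam * (2 * z 2)) = Complex.exp (lam * z 2) * Complex.exp (lam * z 2) := by
          rw [← Complex.exp_add]; ring_nf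
        rw [this]; ring
end

section
/- Let S = ℂ[x₁,y₁,x₂,y₂] and let φ : S⁷ → S³ be given (on relevant columns) by the matrix with rows (y₂, x₂, y₂, x₂, -y₂, -x₂), (y₁, x₁, 0, 0, 0, 0), (0, 0, y₂, x₂, y₁, x₁). Then the vanishing locus in ℂ⁴ of the ideal of 3×3 minors of φ is the union of three planes: {x₁ = y₁ = 0} ∪ {x₂ = y₂ = 0} ∪ {x₁+x₂ = y₁+y₂ = 0}. -/
open MvPolynomial

/-- The presentation matrix `φ` (its relevant columns) of the first homology of
the universal complex of the Bibby model of `Conf(E*, 2)`, over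
`S = ℂ[x₁, y₁, x₂, y₂]` (variables `X 0 = x₁`, `X 1 = y₁`, `X 2 = x₂`, `X 3 = y₂`). -/
noncomputable def confMatrix : Matrix (Fin 3) (Fin 6) (MvPolynomial (Fin 4) ℂ) :=
  !![X 3, X 2, X 3, X 2, -X 3, -X 2;
     X 1, X 0, 0, 0, 0, 0;
     0, 0, X 3, X 2, X 1, X 0]

lemma row1_eval (c : Fin 4 → ℂ) (h0 : c 0 = 0) (h1 : c 1 = 0) (k : Fin 6) :
    MvPolynomial.eval c (confMatrix 1 k) = 0 := by
  fin_cases k <;>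
    simp [confMatrix, Matrix.cons_val_succ, show (5 : Fin 6) = Fin.succ 4 by rfl, h0, h1]

lemma row0_eval (c : Fin 4 → ℂ) (h2 : c 2 = 0) (h3 : c 3 = 0) (k : Fin 6) :
    MvPolynomial.eval c (confMatrix 0 k) = 0 := by
  fin_cases k <;>
    simp [confMatrix, Matrix.cons_val_succ, show (5 : Fin 6) = Fin.succ 4 by rfl, h2, h3]

lemma rowrel_eval (c : Fin 4 → ℂ) (hp : c 0 + c 2 = 0) (hq : c 1 + c 3 = 0) (k : Fin 6) :
    MvPolynomial.eval c (confMatrix 0 k) =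
      MvPolynomial.eval c (confMatrix 2 k) - MvPolynomial.eval c (confMatrix 1 k) := by
  fin_cases k <;>
    simp [confMatrix, Matrix.cons_val_succ, show (5 : Fin 6) = Fin.succ 4 by rfl] <;>
    first
      | linear_combination hp
      | linear_combination hq
      | linear_combination -hp
      | linear_combination -hq

lemma prod_aux {u v s : ℂ} (hu : u ≠ 0) (hv : v ≠ 0) (e : u * v * s = 0) : s = 0 :=
  (mul_eq_zero.mp e).resolve_left (mul_ne_zero hu hv)

/-- the vanishing locus in `ℂ⁴` of the ideal of `3 × 3` minors of
the matrix `φ` with rows `(y₂, x₂, y₂, x₂, -y₂, -x₂)`, `(y₁, x₁, 0, 0, 0, 0)`,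
`(0, 0, y₂, x₂, y₁, x₁)` is the union of the three planes
`{x₁ = y₁ = 0} ∪ {x₂ = y₂ = 0} ∪ {x₁ + x₂ = y₁ + y₂ = 0}`. -/
theorem statement_18 :
    {c : Fin 4 → ℂ | ∀ g : Fin 3 → Fin 6,
        MvPolynomial.eval c (Matrix.det (confMatrix.submatrix id g)) = 0}
      = {c | c 0 = 0 ∧ c 1 = 0} ∪ {c | c 2 = 0 ∧ c 3 = 0}
          ∪ {c | c 0 + c 2 = 0 ∧ c 1 + c 3 = 0} := by
  ext c
  simp only [Set.mem_setOf_eq, Set.mem_union]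
  constructor
  · intro h
    by_cases hA : c 0 = 0 ∧ c 1 = 0
    · exact Or.inl (Or.inl hA)
    by_cases hP : c 2 = 0 ∧ c 3 = 0
    · exact Or.inl (Or.inr hP)
    refine Or.inr ?_
    push_neg at hA hP
    -- minors
    have h024 := h ![0, 2, 4]
    have h025 := h ![0, 2, 5]
    have h034 := h ![0, 3, 4]
    have h035 := h ![0, 3, 5]
    have h124 := h ![1, 2, 4]
    have h125 := h ![1, 2, 5]
    have h134 := h ![1, 3, 4]
    have h135 := h ![1, 3, 5]
    simp only [confMatrix, Matrix.det_fin_three] at h024 h025 h034 h035 h124 h125 h134 h135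
    simp [confMatrix, Matrix.cons_val_succ, show (5 : Fin 6) = Fin.succ 4 by rfl] at h024 h025 h034 h035 h124 h125 h134 h135
    by_cases ha : c 0 = 0
    · have hb : c 1 ≠ 0 := by tauto
      by_cases hp : c 2 = 0
      · have hq : c 3 ≠ 0 := by tauto
        constructor
        · exact prod_aux hb hq (by linear_combination -h025)
        · exact prod_aux hb hq (by linear_combination -h024)
      · constructor
        · exact prod_aux hb hp (by linear_combination -h035)
        · exact prod_aux hb hp (by linear_combination -h034)
    · by_cases hp : c 2 = 0
      · have hq : c 3 ≠ 0 := by tauto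
        constructor
        · exact prod_aux ha hq (by linear_combination -h125)
        · exact prod_aux ha hq (by linear_combination -h124)
      · constructor
        · exact prod_aux ha hp (by linear_combination -h135)
        · exact prod_aux ha hp (by linear_combination -h134)
  · rintro ((⟨h0, h1⟩ | ⟨h2, h3⟩) | ⟨hp, hq⟩) <;> intro g <;>
      rw [RingHom.map_det, Matrix.det_fin_three] <;>
      simp only [RingHom.mapMatrix_apply, Matrix.map_apply, Matrix.submatrix_apply, id_eq]
    · rw [row1_eval c h0 h1 (g 0), row1_eval c h0 h1 (g 1), row1_eval c h0 h1 (g 2)]; ring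
    · rw [row0_eval c h2 h3 (g 0), row0_eval c h2 h3 (g 1), row0_eval c h2 h3 (g 2)]; ring
    · rw [rowrel_eval c hp hq (g 0), rowrel_eval c hp hq (g 1), rowrel_eval c hp hq (g 2)]; ring
end
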